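/- Let E be a real normed vector space, let x, p ∈ E and r > 0 with ‖p − x‖ < r, and let u ∈ E with ‖u‖ = 1. Define γ(s) = p + s·u for s ∈ ℝ, and set s₁ = inf{s > 0 : ‖γ(s) − x‖ ≥ r} and s₂ = inf{s > 0 : ‖γ(s) − x‖ ≥ 4r}. Then s₁ and s₂ are finite, s₁ ≤ 2r, s₂ − s₁ ≥ 3r, and for every s with s₁ < s < s₂ one has r ≤ ‖γ(s) − x‖ < 4r (i.e., γ(s) lies in the closed annulus between the balls of radius r and 4r around x). -/
import Mathlib


/-- Lemma 1 for normed vector spaces. If `‖p - x‖ < r` and `‖u‖ = 1`, set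
`γ s = p + s • u`, `s₁ = inf {s > 0 | ‖γ s - x‖ ≥ r}` and
`s₂ = inf {s > 0 | ‖γ s - x‖ ≥ 4r}`. Then both sets are nonempty (so `s₁`, `s₂` are
finite), `s₁ ≤ 2r`, `s₂ - s₁ ≥ 3r`, and for all `s₁ < s < s₂` one has
`r ≤ ‖γ s - x‖ < 4r`. -/
theorem ergodic_nongeneric_stmt7 {E : Type*} [NormedAddCommGroup E] [NormedSpace ℝ E]
    (x p u : E) (r : ℝ) (hr : 0 < r) (hp : ‖p - x‖ < r) (hu : ‖u‖ = 1)
    (γ : ℝ → E) (hγ : ∀ s : ℝ, γ s = p + s • u)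
    (s₁ s₂ : ℝ)
    (hs₁ : s₁ = sInf {s : ℝ | 0 < s ∧ r ≤ ‖γ s - x‖})
    (hs₂ : s₂ = sInf {s : ℝ | 0 < s ∧ 4 * r ≤ ‖γ s - x‖}) :
    {s : ℝ | 0 < s ∧ r ≤ ‖γ s - x‖}.Nonempty ∧
    {s : ℝ | 0 < s ∧ 4 * r ≤ ‖γ s - x‖}.Nonempty ∧
    s₁ ≤ 2 * r ∧ 3 * r ≤ s₂ - s₁ ∧
    ∀ s : ℝ, s₁ < s → s < s₂ → r ≤ ‖γ s - x‖ ∧ ‖γ s - x‖ < 4 * r := by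
  have key : ∀ s : ℝ, γ s - x = (p - x) + s • u := by
    intro s; rw [hγ]; abel
  set v := p - x with hv
  -- 1-Lipschitz estimate
  have hlip : ∀ s t : ℝ, ‖v + s • u‖ ≤ ‖v + t • u‖ + |s - t| := by
    intro s t
    have h1 : v + s • u = (v + t • u) + (s - t) • u := by module
    calc ‖v + s • u‖ = ‖(v + t • u) + (s - t) • u‖ := by rw [h1]
      _ ≤ ‖v + t • u‖ + ‖(s - t) • u‖ := norm_add_le _ _
      _ = ‖v + t • u‖ + |s - t| := by
          rw [norm_smul, hu, Real.norm_eq_abs, mul_one]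
  -- lower estimate
  have hlow : ∀ s : ℝ, s - ‖v‖ ≤ ‖v + s • u‖ := by
    intro s
    have h1 : ‖s • u‖ = ‖(v + s • u) - v‖ := by congr 1; abel
    have h2 : ‖(v + s • u) - v‖ ≤ ‖v + s • u‖ + ‖v‖ := norm_sub_le _ _
    have h3 : |s| = ‖s • u‖ := by rw [norm_smul, hu, Real.norm_eq_abs, mul_one]
    have := le_abs_self s
    linarith
  have hvr : ‖v‖ < r := hp
  have hf : ∀ s : ℝ, ‖γ s - x‖ = ‖v + s • u‖ := fun s => by rw [key]
  -- Nonemptiness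
  have mem1 : (2 * r) ∈ {s : ℝ | 0 < s ∧ r ≤ ‖γ s - x‖} := by
    refine ⟨by linarith, ?_⟩
    rw [hf]; have := hlow (2 * r); linarith
  have mem2 : (5 * r) ∈ {s : ℝ | 0 < s ∧ 4 * r ≤ ‖γ s - x‖} := by
    refine ⟨by linarith, ?_⟩
    rw [hf]; have := hlow (5 * r); linarith
  have ne1 : {s : ℝ | 0 < s ∧ r ≤ ‖γ s - x‖}.Nonempty := ⟨_, mem1⟩
  have ne2 : {s : ℝ | 0 < s ∧ 4 * r ≤ ‖γ s - x‖}.Nonempty := ⟨_, mem2⟩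
  have bdd1 : BddBelow {s : ℝ | 0 < s ∧ r ≤ ‖γ s - x‖} := ⟨0, fun t ht => le_of_lt ht.1⟩
  have bdd2 : BddBelow {s : ℝ | 0 < s ∧ 4 * r ≤ ‖γ s - x‖} := ⟨0, fun t ht => le_of_lt ht.1⟩
  -- s₁ ≤ 2r
  have hs1le : s₁ ≤ 2 * r := hs₁ ▸ csInf_le bdd1 mem1
  -- s₁ ≥ r - ‖v‖ > 0
  have hs1pos : 0 < s₁ := by
    have hlb : r - ‖v‖ ≤ s₁ := by
      rw [hs₁]
      apply le_csInf ne1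
      intro t ht
      obtain ⟨ht0, htr⟩ := ht
      rw [hf] at htr
      have h2 := hlip t 0
      simp only [zero_smul, add_zero, sub_zero] at h2
      rw [abs_of_pos ht0] at h2
      linarith
    linarith
  -- f(s₁) ≤ r
  have hfs1le : ‖v + s₁ • u‖ ≤ r := by
    by_contra h
    push_neg at h
    set ε := ‖v + s₁ • u‖ - r with hε
    have hεpos : 0 < ε := by linarith
    have hεlt : ε < s₁ := by
      have h2 := hlip s₁ 0
      simp only [zero_smul, add_zero, sub_zero] at h2
      rw [abs_of_pos hs1pos] at h2
      linarith
    have hmem : (s₁ - ε / 2) ∈ {s : ℝ | 0 < s ∧ r ≤ ‖γ s - x‖} := by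
      refine ⟨by linarith, ?_⟩
      rw [hf]
      have h2 := hlip s₁ (s₁ - ε / 2)
      have : |s₁ - (s₁ - ε / 2)| = ε / 2 := by
        rw [abs_of_nonneg] <;> linarith
      rw [this] at h2
      linarith
    have := hs₁ ▸ csInf_le bdd1 hmem
    linarith
  -- f(s₁) ≥ r
  have hfs1ge : r ≤ ‖v + s₁ • u‖ := by
    by_contra h
    push_neg at h
    set ε := r - ‖v + s₁ • u‖ with hε
    have hεpos : 0 < ε := by linarith
    obtain ⟨t, ht, htlt⟩ := Real.lt_sInf_add_pos ne1 hεpos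
    rw [← hs₁] at htlt
    have hts : s₁ ≤ t := hs₁ ▸ csInf_le bdd1 ht
    have h2 := hlip t s₁
    have habs : |t - s₁| < ε := by rw [abs_of_nonneg (by linarith)]; linarith
    have := ht.2
    rw [hf] at this
    linarith
  -- s₂ ≥ s₁ + 3r
  have hs2ge : s₁ + 3 * r ≤ s₂ := by
    rw [hs₂]
    apply le_csInf ne2
    intro t ht
    obtain ⟨ht0, htr⟩ := ht
    rw [hf] at htr
    have hts : s₁ ≤ t := by
      apply hs₁ ▸ csInf_le bdd1
      exact ⟨ht0, by rw [hf]; linarith⟩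
    have h2 := hlip t s₁
    rw [abs_of_nonneg (by linarith)] at h2
    linarith
  refine ⟨ne1, ne2, hs1le, by linarith, ?_⟩
  intro s hs1lt hs2lt
  constructor
  · -- convexity argument: r ≤ f(s) for s > s₁
    rw [hf]
    set lam := s₁ / s with hlam
    have hspos : 0 < s := lt_trans hs1pos hs1lt
    have hlam0 : 0 < lam := div_pos hs1pos hspos
    have hlam1 : lam < 1 := (div_lt_one hspos).mpr hs1lt
    have hcomb : v + s₁ • u = (1 - lam) • v + lam • (v + s • u) := by
      have hls : lam * s = s₁ := div_mul_cancel₀ _ (ne_of_gt hspos)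
      rw [← hls]; module
    have hnorm : ‖v + s₁ • u‖ ≤ (1 - lam) * ‖v‖ + lam * ‖v + s • u‖ := by
      calc ‖v + s₁ • u‖ = ‖(1 - lam) • v + lam • (v + s • u)‖ := by rw [hcomb]
        _ ≤ ‖(1 - lam) • v‖ + ‖lam • (v + s • u)‖ := norm_add_le _ _
        _ = (1 - lam) * ‖v‖ + lam * ‖v + s • u‖ := by
            rw [norm_smul, norm_smul, Real.norm_eq_abs, Real.norm_eq_abs,
              abs_of_nonneg (by linarith), abs_of_nonneg (le_of_lt hlam0)]
    nlinarith [norm_nonneg (v + s • u)]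
  · -- f(s) < 4r for s < s₂
    by_contra h
    push_neg at h
    have hmem : s ∈ {s : ℝ | 0 < s ∧ 4 * r ≤ ‖γ s - x‖} :=
      ⟨lt_trans hs1pos hs1lt, h⟩
    have := hs₂ ▸ csInf_le bdd2 hmem
    linarith
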